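/- arXiv:1806.11540 — 4 statements merged into one kernel-verified Lean document; each statement's English description precedes it below -/
import Mathlib

section
/- There exists a unit η ∈ 𝓞_H^× with τ(η) = η such that ∏_{g∈T} g(η) = 1 and such that the kernel of the group homomorphism ℤ^T → 𝓞_H^× sending a family (a_g)_{g∈T} of integers to ∏_{g∈T} g(η)^{a_g} is exactly the subgroup ℤ·(1,…,1) of constant families. In particular, the subgroup of 𝓞_H^× generated by {g(η) : g ∈ T} is free abelian of rank [H:ℚ]/2 − 1, which is the rank of 𝓞_H^× (the maximal possible). -/
open NumberField

/-- The action of a `ℚ`-automorphism of a number field `H` on the units of its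
ring of integers. -/
noncomputable def galU (H : Type*) [Field H] [NumberField H] (g : H ≃ₐ[ℚ] H) :
    (𝓞 H)ˣ ≃* (𝓞 H)ˣ :=
  Units.mapEquiv (galRestrict ℤ ℚ H (𝓞 H) g).toRingEquiv.toMulEquiv

section Aux

variable {H : Type*} [Field H] [NumberField H]

/-- The coercion of units of `𝓞 H` into `H`, as a monoid hom. -/
noncomputable def Uval : (𝓞 H)ˣ →* H :=
  (algebraMap (𝓞 H) H).toMonoidHom.comp (Units.coeHom (𝓞 H))

lemma Uval_apply (u : (𝓞 H)ˣ) : Uval u = algebraMap (𝓞 H) H (u : 𝓞 H) := rfl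

lemma Uval_injective : Function.Injective (Uval (H := H)) := by
  intro u v h
  exact Units.ext (RingOfIntegers.coe_injective h)

lemma Uval_galU (g : H ≃ₐ[ℚ] H) (u : (𝓞 H)ˣ) : Uval (galU H g u) = g (Uval u) := by
  rw [Uval_apply, galU, Units.coe_mapEquiv]
  exact algebraMap_galRestrict_apply ℤ g (u : 𝓞 H)

lemma Uval_pos (w : InfinitePlace H) (u : (𝓞 H)ˣ) : 0 < w (Uval u) := by
  rw [InfinitePlace.pos_iff, Uval_apply]
  exact RingOfIntegers.coe_ne_zero_iff.mpr u.ne_zero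

lemma comap_aut_mul (w : InfinitePlace H) (g h : H ≃ₐ[ℚ] H) :
    (w.comap (g : H →+* H)).comap (h : H →+* H) = w.comap ((g * h : H ≃ₐ[ℚ] H) : H →+* H) := by
  rw [← InfinitePlace.comap_comp]
  congr 1

lemma comap_aut_one (w : InfinitePlace H) :
    w.comap (((1 : H ≃ₐ[ℚ] H)) : H →+* H) = w := by
  have : (((1 : H ≃ₐ[ℚ] H)) : H →+* H) = RingHom.id H := by ext x; rfl
  rw [this, InfinitePlace.comap_id]

end Aux

section Aux2
variable {H : Type*} [Field H] [NumberField H]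
  (ι : H →+* ℂ) (τ : H ≃ₐ[ℚ] H)
  (hιτ : ∀ x : H, ι (τ x) = starRingEnd ℂ (ι x))

include hιτ in
lemma comap_fix_iff (g : H ≃ₐ[ℚ] H) :
    (InfinitePlace.mk ι).comap (g : H →+* H) = InfinitePlace.mk ι ↔ (g = 1 ∨ g = τ) := by
  rw [InfinitePlace.comap_mk, InfinitePlace.mk_eq_iff]
  constructor
  · rintro (h | h)
    · left
      ext x
      exact ι.injective (RingHom.congr_fun h x)
    · right
      ext x
      apply ι.injective
      have := RingHom.congr_fun h x
      rw [ComplexEmbedding.conjugate_coe_eq] at this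
      rw [hιτ]
      apply (starRingEnd ℂ).injective
      rw [Complex.conj_conj]
      exact this
  · rintro (rfl | h)
    · left; ext x; rfl
    · subst h
      right
      ext x
      show (starRingEnd ℂ) (ι (g x)) = ι x
      rw [hιτ, Complex.conj_conj]
end Aux2

section Aux3
variable {G : Type*} [Group G] [Fintype G] [DecidableEq G]
  (τ : G) (hτ2 : τ * τ = 1) (hτ1 : τ ≠ 1)
  (T : Finset G)
  (hT : ∀ g : G, ∃! t, t ∈ T ∧ (t = g ∨ t = g * τ))

include hT in
lemma T_unique {s t : G} (hs : s ∈ T) (ht : t ∈ T) (h : s = t ∨ s = t * τ) : s = t := by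
  obtain ⟨r, -, hru⟩ := hT t
  rw [hru s ⟨hs, h⟩, hru t ⟨ht, Or.inl rfl⟩]

include hτ1 hT in
lemma T_disjoint : Disjoint T (T.image (· * τ)) := by
  rw [Finset.disjoint_left]
  intro a haT haI
  obtain ⟨s, hsT, hs⟩ := Finset.mem_image.mp haI
  have := T_unique τ T hT haT hsT (Or.inr hs.symm)
  subst this
  have : a * τ = a * 1 := by rw [mul_one, hs]
  exact hτ1 (mul_left_cancel this)

include hτ2 hT in
lemma T_union : T ∪ T.image (· * τ) = Finset.univ := by
  ext g
  simp only [Finset.mem_union, Finset.mem_image, Finset.mem_univ, iff_true]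
  obtain ⟨t, ⟨htT, ht⟩, -⟩ := hT g
  rcases ht with rfl | rfl
  · exact Or.inl htT
  · exact Or.inr ⟨g * τ, htT, by rw [mul_assoc, hτ2, mul_one]⟩

include hτ2 hτ1 hT in
lemma T_card : 2 * T.card = Fintype.card G := by
  classical
  have hinj : Function.Injective (· * τ) := fun a b h => mul_right_cancel h
  calc 2 * T.card = T.card + (T.image (· * τ)).card := by
        rw [Finset.card_image_of_injective _ hinj]; ring
    _ = (T ∪ T.image (· * τ)).card := (Finset.card_union_of_disjoint (T_disjoint τ hτ1 T hT)).symm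
    _ = Fintype.card G := by rw [T_union τ hτ2 T hT, Finset.card_univ]

include hτ2 hT in
lemma rep_eq {a : G} (ha : a ∈ T) {g : G} (h : a = g ∨ a = g * τ) :
    ∀ b ∈ T, (b = g ∨ b = g * τ) → b = a := by
  intro b hb hbg
  obtain ⟨r, -, hru⟩ := hT g
  rw [hru b ⟨hb, hbg⟩, hru a ⟨ha, h⟩]

end Aux3


/-- Let `H` be a totally complex number field, Galois over `ℚ`, with
complex conjugation `τ` attached to a fixed embedding `ι : H → ℂ`, and let `T` be a set of
representatives of the left cosets of `{1, τ}` in `Gal(H/ℚ)`.  Then there exists a unit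
`η ∈ 𝓞_H^×` fixed by `τ`, with `∏_{g ∈ T} g η = 1`, and such that the kernel of
`ℤ^T → 𝓞_H^×`, `(a_g) ↦ ∏ g(η)^(a_g)`, is exactly the subgroup of constant families.
In particular the subgroup generated by the `g η`, `g ∈ T`, is free abelian of rank
`[H:ℚ]/2 - 1`. -/
theorem stmt_0 (H : Type*) [Field H] [NumberField H] [IsGalois ℚ H]
    (hH : (H →+* ℝ) → False)
    (ι : H →+* ℂ) (τ : H ≃ₐ[ℚ] H)
    (hιτ : ∀ x : H, ι (τ x) = starRingEnd ℂ (ι x))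
    (hτ2 : τ * τ = 1) (hτ1 : τ ≠ 1)
    (T : Finset (H ≃ₐ[ℚ] H))
    (hT : ∀ g : H ≃ₐ[ℚ] H, ∃! t, t ∈ T ∧ (t = g ∨ t = g * τ)) :
    ∃ η : (𝓞 H)ˣ,
      galU H τ η = η ∧
      (∏ g ∈ T, galU H g η) = 1 ∧
      (∀ a : (H ≃ₐ[ℚ] H) → ℤ,
        (∏ g ∈ T, galU H g η ^ a g) = 1 ↔ ∃ c : ℤ, ∀ g ∈ T, a g = c) ∧
      Nonempty ((Subgroup.closure {x : (𝓞 H)ˣ | ∃ g ∈ T, x = galU H g η}) ≃*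
        Multiplicative (Fin (Module.finrank ℚ H / 2 - 1) → ℤ)) := by
  classical
  obtain ⟨t₀, ⟨ht₀T, -⟩, -⟩ := hT 1
  have hTne : T.Nonempty := ⟨t₀, ht₀T⟩
  set v0 : InfinitePlace H := InfinitePlace.mk ι with hv0
  obtain ⟨ε, hε⟩ := NumberField.Units.dirichletUnitTheorem.exists_unit (K := H) v0
  have hττ : ∀ y : H, τ (τ y) = y := fun y => by
    have h1 : (τ * τ) y = (1 : H ≃ₐ[ℚ] H) y := by rw [hτ2]
    simpa using h1
  set η₀ : (𝓞 H)ˣ := ε * galU H τ ε with hη₀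
  have hUη₀ : Uval η₀ = Uval ε * τ (Uval ε) := by rw [hη₀, map_mul, Uval_galU]
  have hτη₀ : galU H τ η₀ = η₀ := by
    apply Uval_injective
    rw [Uval_galU, hUη₀, map_mul, hττ, mul_comm]
  set η : (𝓞 H)ˣ := η₀ * η₀ with hη
  have hτη : galU H τ η = η := by rw [hη, map_mul, hτη₀]
  have hτUη₀ : τ (Uval η₀) = Uval η₀ := by rw [← Uval_galU, hτη₀]
  -- the `rep` function
  have hrep0 : ∀ g : H ≃ₐ[ℚ] H, ∃ t, t ∈ T ∧ (t = g ∨ t = g * τ) := fun g => (hT g).exists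
  choose rep hrepT hrepE using hrep0
  have hrep_unique : ∀ {a g : H ≃ₐ[ℚ] H}, a ∈ T → (a = g ∨ a = g * τ) → rep g = a := by
    intro a g ha h
    obtain ⟨r, -, hru⟩ := hT g
    rw [hru (rep g) ⟨hrepT g, hrepE g⟩, hru a ⟨ha, h⟩]
  -- splitting a product over the Galois group along T
  have hprodG : ∀ y : H, τ y = y → ∏ g : H ≃ₐ[ℚ] H, g y = (∏ t ∈ T, t y) ^ 2 := by
    intro y hy
    have hinj : Function.Injective (· * τ : (H ≃ₐ[ℚ] H) → _) := fun a b h => mul_right_cancel h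
    have h1 : ∏ g : H ≃ₐ[ℚ] H, g y = ∏ g ∈ T ∪ T.image (· * τ), g y := by
      rw [T_union τ hτ2 T hT]
    rw [h1, Finset.prod_union (T_disjoint τ hτ1 T hT),
      Finset.prod_image (fun a _ b _ h => hinj h)]
    have h2 : ∀ t ∈ T, (t * τ) y = t y := fun t _ => by
      show t (τ y) = t y
      rw [hy]
    rw [Finset.prod_congr rfl h2, sq]
  -- norm of η₀ is ±1, and the square of P := ∏_{t ∈ T} t η₀ is the norm
  have hnorm1 : |Algebra.norm ℚ (Uval η₀)| = 1 := by
    have h0 := NumberField.isUnit_iff_norm.mp η₀.isUnit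
    rwa [RingOfIntegers.coe_norm] at h0
  have hq : Algebra.norm ℚ (Uval η₀) = 1 ∨ Algebra.norm ℚ (Uval η₀) = -1 :=
    (abs_eq (by norm_num)).mp hnorm1
  set P : H := ∏ t ∈ T, t (Uval η₀) with hPdef
  have hP2 : P ^ 2 = algebraMap ℚ H (Algebra.norm ℚ (Uval η₀)) := by
    rw [hPdef, ← hprodG _ hτUη₀, Algebra.norm_eq_prod_automorphisms]
  -- ι P is real
  have hconj : starRingEnd ℂ (ι P) = ι P := by
    rw [hPdef, map_prod, map_prod]
    refine Finset.prod_nbij' (fun t => rep (τ * t)) (fun t => rep (τ * t))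
      (fun t _ => hrepT _) (fun t _ => hrepT _) ?_ ?_ ?_
    · intro t ht
      show rep (τ * rep (τ * t)) = t
      rcases hrepE (τ * t) with h | h
      · rw [h]
        have hτt : τ * (τ * t) = t := by rw [← mul_assoc, hτ2, one_mul]
        rw [hτt]
        exact hrep_unique ht (Or.inl rfl)
      · rw [h]
        have hτt : τ * (τ * t * τ) = t * τ := by
          rw [← mul_assoc, ← mul_assoc, hτ2, one_mul]
        rw [hτt]
        exact hrep_unique ht (Or.inr (by rw [mul_assoc, hτ2, mul_one]))
    · intro t ht
      show rep (τ * rep (τ * t)) = t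
      rcases hrepE (τ * t) with h | h
      · rw [h]
        have hτt : τ * (τ * t) = t := by rw [← mul_assoc, hτ2, one_mul]
        rw [hτt]
        exact hrep_unique ht (Or.inl rfl)
      · rw [h]
        have hτt : τ * (τ * t * τ) = t * τ := by
          rw [← mul_assoc, ← mul_assoc, hτ2, one_mul]
        rw [hτt]
        exact hrep_unique ht (Or.inr (by rw [mul_assoc, hτ2, mul_one]))
    · intro t _
      have e1 : starRingEnd ℂ (ι (t (Uval η₀))) = ι ((τ * t) (Uval η₀)) := by
        rw [← hιτ]
        rfl
      rw [e1]
      show ι ((τ * t) (Uval η₀)) = ι (rep (τ * t) (Uval η₀))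
      rcases hrepE (τ * t) with h | h
      · rw [h]
      · rw [h]
        show ι ((τ * t) (Uval η₀)) = ι ((τ * t) (τ (Uval η₀)))
        rw [hτUη₀]
  -- the norm of η₀ is 1 (it is a square of a real number)
  have hq1 : Algebra.norm ℚ (Uval η₀) = 1 := by
    rcases hq with h | h
    · exact h
    · exfalso
      have hre : ((ι P).re : ℂ) = ι P := Complex.conj_eq_iff_re.mp hconj
      have h2 : (ι P) ^ 2 = -1 := by
        rw [← map_pow, hP2, h, map_neg, map_one, map_neg, map_one]
      rw [← hre] at h2
      have h3 : ((ι P).re) ^ 2 = -1 := by exact_mod_cast h2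
      nlinarith [sq_nonneg (ι P).re]
  have hP2' : P ^ 2 = 1 := by rw [hP2, hq1, map_one]
  -- the product of the conjugates of η over T is 1
  have hUvalη : ∀ t : H ≃ₐ[ℚ] H, Uval (galU H t η) = (t (Uval η₀)) ^ 2 := by
    intro t
    rw [Uval_galU, hη, map_mul, map_mul, sq]
  have hprod1 : ∏ t ∈ T, galU H t η = 1 := by
    apply Uval_injective
    rw [map_prod, map_one]
    calc ∏ t ∈ T, Uval (galU H t η) = ∏ t ∈ T, (t (Uval η₀)) ^ 2 :=
          Finset.prod_congr rfl fun t _ => hUvalη t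
      _ = P ^ 2 := by rw [Finset.prod_pow, hPdef]
      _ = 1 := hP2'
  -- the places w_t and the key identification
  set wm : (H ≃ₐ[ℚ] H) → InfinitePlace H :=
    fun s => v0.comap ((s⁻¹ : H ≃ₐ[ℚ] H) : H →+* H) with hwm
  have hcomap_wm : ∀ s t : H ≃ₐ[ℚ] H,
      (wm s).comap (t : H →+* H) = v0.comap ((s⁻¹ * t : H ≃ₐ[ℚ] H) : H →+* H) :=
    fun s t => comap_aut_mul v0 s⁻¹ t
  have key : ∀ s t : H ≃ₐ[ℚ] H,
      ((wm s).comap ((t : H ≃ₐ[ℚ] H) : H →+* H) = v0 ↔ (t = s ∨ t = s * τ)) := by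
    intro s t
    rw [hcomap_wm, hv0, comap_fix_iff ι τ hιτ]
    constructor
    · rintro (h | h)
      · exact Or.inl (inv_mul_eq_one.mp h).symm
      · exact Or.inr (by rw [← h]; exact (mul_inv_cancel_left s t).symm)
    · rintro (rfl | rfl)
      · exact Or.inl (by group)
      · exact Or.inr (by group)
  have key2 : ∀ s t : H ≃ₐ[ℚ] H,
      ((wm s).comap ((t * τ : H ≃ₐ[ℚ] H) : H →+* H) = v0 ↔ (t = s ∨ t = s * τ)) := by
    intro s t
    rw [hcomap_wm, hv0, comap_fix_iff ι τ hιτ]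
    constructor
    · rintro (h | h)
      · have hs : s = t * τ := inv_mul_eq_one.mp h
        exact Or.inr (by rw [hs, mul_assoc, hτ2, mul_one])
      · have h2 := congrArg (s * ·) h
        simp only [mul_inv_cancel_left] at h2
        exact Or.inl (mul_right_cancel h2)
    · rintro (rfl | rfl)
      · exact Or.inr (by group)
      · exact Or.inl (by rw [mul_assoc, hτ2, mul_one]; group)
  -- the kernel statement
  have hker : ∀ a : (H ≃ₐ[ℚ] H) → ℤ,
      (∏ g ∈ T, galU H g η ^ a g) = 1 ↔ ∃ c : ℤ, ∀ g ∈ T, a g = c := by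
    intro a
    constructor
    · intro h
      obtain ⟨ts, htsT, hmax⟩ := T.exists_max_image a hTne
      set w : InfinitePlace H := wm ts with hwdef
      have hwpos : ∀ t : H ≃ₐ[ℚ] H, 0 < w (Uval (galU H t η)) := fun t => Uval_pos w _
      have hLne : ∀ t : H ≃ₐ[ℚ] H, w (Uval (galU H t η)) ≠ 0 := fun t => (hwpos t).ne'
      set L : (H ≃ₐ[ℚ] H) → ℝ := fun t => Real.log (w (Uval (galU H t η))) with hL
      have hA : ∑ t ∈ T, (a t : ℝ) * L t = 0 := by
        have h1 : w (Uval (∏ g ∈ T, galU H g η ^ a g)) = 1 := by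
          rw [h, map_one, map_one]
        rw [map_prod, map_prod] at h1
        have h2 : ∀ t ∈ T, w (Uval (galU H t η ^ a t)) = w (Uval (galU H t η)) ^ a t :=
          fun t _ => by rw [map_zpow, map_zpow₀]
        rw [Finset.prod_congr rfl h2] at h1
        have h3 := congrArg Real.log h1
        rw [Real.log_prod (fun t ht => zpow_ne_zero _ (hLne t)), Real.log_one] at h3
        rw [← h3]
        exact Finset.sum_congr rfl fun t _ => (Real.log_zpow _ _).symm
      have hB : ∑ t ∈ T, L t = 0 := by
        have h1 : w (Uval (∏ g ∈ T, galU H g η)) = 1 := by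
          rw [hprod1, map_one, map_one]
        rw [map_prod, map_prod] at h1
        have h3 := congrArg Real.log h1
        rwa [Real.log_prod (fun t ht => hLne t), Real.log_one] at h3
      have hC : ∑ t ∈ T, ((a ts - a t : ℤ) : ℝ) * L t = 0 := by
        push_cast
        simp only [sub_mul]
        rw [Finset.sum_sub_distrib, ← Finset.mul_sum, hB, mul_zero, hA, sub_zero]
      have hLneg : ∀ t ∈ T, t ≠ ts → L t < 0 := by
        intro t ht hne
        have hwt : (w.comap ((t : H ≃ₐ[ℚ] H) : H →+* H)) ≠ v0 := fun hc =>
          hne (T_unique τ T hT ht htsT ((key ts t).mp hc))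
        have hwtτ : (w.comap (((t * τ : H ≃ₐ[ℚ] H)) : H →+* H)) ≠ v0 := fun hc =>
          hne (T_unique τ T hT ht htsT ((key2 ts t).mp hc))
        have e1 : w (Uval (galU H t η)) = (w (t (Uval ε)) * w ((t * τ) (Uval ε))) ^ 2 := by
          rw [hUvalη t, map_pow, hUη₀, map_mul, map_mul]
          rfl
        have hp1 : 0 < w (t (Uval ε)) := by
          rw [← Uval_galU]; exact Uval_pos w _
        have hp2 : 0 < w ((t * τ) (Uval ε)) := by
          rw [← Uval_galU]; exact Uval_pos w _
        have hl1 : Real.log (w (t (Uval ε))) < 0 := hε _ hwt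
        have hl2 : Real.log (w ((t * τ) (Uval ε))) < 0 := hε _ hwtτ
        have : L t = 2 * (Real.log (w (t (Uval ε))) + Real.log (w ((t * τ) (Uval ε)))) := by
          rw [hL]
          show Real.log (w (Uval (galU H t η))) = _
          rw [e1, Real.log_pow, Real.log_mul hp1.ne' hp2.ne']
          norm_num
        rw [this]
        linarith
      have hterms : ∀ t ∈ T, ((a ts - a t : ℤ) : ℝ) * L t ≤ 0 := by
        intro t ht
        rcases eq_or_ne t ts with rfl | hne
        · simp
        · apply mul_nonpos_of_nonneg_of_nonpos
          · exact_mod_cast Int.cast_nonneg_iff.mpr (sub_nonneg.mpr (hmax t ht))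
          · exact (hLneg t ht hne).le
      have hzero := (Finset.sum_eq_zero_iff_of_nonpos hterms).mp hC
      refine ⟨a ts, fun g hg => ?_⟩
      rcases eq_or_ne g ts with rfl | hne
      · rfl
      · have h0 := hzero g hg
        rcases mul_eq_zero.mp h0 with h1 | h1
        · have h2 : (a ts - a g : ℤ) = 0 := by exact_mod_cast h1
          omega
        · exact absurd h1 (hLneg g hg hne).ne
    · rintro ⟨c, hc⟩
      calc ∏ g ∈ T, galU H g η ^ a g = ∏ g ∈ T, galU H g η ^ c :=
            Finset.prod_congr rfl fun g hg => by rw [hc g hg]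
        _ = (∏ g ∈ T, galU H g η) ^ c := Finset.prod_zpow _ _ _
        _ = 1 := by rw [hprod1, one_zpow]
  -- cardinalities
  have hcardG : Fintype.card (H ≃ₐ[ℚ] H) = Module.finrank ℚ H :=
    by rw [← Nat.card_eq_fintype_card]; exact IsGalois.card_aut_eq_finrank ℚ H
  have h2T : 2 * T.card = Module.finrank ℚ H := by
    rw [← hcardG]; exact T_card τ hτ2 hτ1 T hT
  set m := Module.finrank ℚ H / 2 - 1 with hm
  set T' := T.erase t₀ with hT'
  have hT'card : T'.card = m := by
    rw [hT', Finset.card_erase_of_mem ht₀T, hm]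
    omega
  set e : Fin m ≃ {x // x ∈ T'} := (T'.equivFinOfCardEq hT'card).symm with he
  set u : (H ≃ₐ[ℚ] H) → (𝓞 H)ˣ := fun g => galU H g η with hu
  have hTprod : ∀ f : (H ≃ₐ[ℚ] H) → (𝓞 H)ˣ,
      ∏ i : Fin m, f ((e i : H ≃ₐ[ℚ] H)) = ∏ g ∈ T', f g := by
    intro f
    rw [← Finset.prod_coe_sort T' f]
    exact Equiv.prod_comp e (fun x => f ((x : H ≃ₐ[ℚ] H)))
  let Φ : Multiplicative (Fin m → ℤ) →* (𝓞 H)ˣ :=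
    MonoidHom.mk' (fun a => ∏ i : Fin m, u (e i) ^ (Multiplicative.toAdd a) i)
      (by
        intro a b
        simp only [toAdd_mul, Pi.add_apply, zpow_add]
        rw [Finset.prod_mul_distrib])
  have hΦapply : ∀ a : Fin m → ℤ,
      Φ (Multiplicative.ofAdd a) = ∏ i : Fin m, u (e i) ^ a i := fun a => rfl
  have hT'subset : ∀ {g : H ≃ₐ[ℚ] H}, g ∈ T' → g ∈ T := fun hg =>
    Finset.mem_of_mem_erase (by rwa [hT'] at hg)
  have ht₀T' : t₀ ∉ T' := by rw [hT']; exact Finset.notMem_erase t₀ T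
  have hat'_mem : ∀ (b : Fin m → ℤ) (i : Fin m),
      (if hg : ((e i : H ≃ₐ[ℚ] H)) ∈ T' then b (e.symm ⟨((e i : H ≃ₐ[ℚ] H)), hg⟩) else 0)
        = b i := by
    intro b i
    rw [dif_pos (e i).2]
    congr
    rw [Subtype.coe_eta, Equiv.symm_apply_apply]
  have hΦinj : Function.Injective Φ := by
    rw [injective_iff_map_eq_one]
    intro a ha
    set b : Fin m → ℤ := Multiplicative.toAdd a with hb
    set at' : (H ≃ₐ[ℚ] H) → ℤ := fun g => if hg : g ∈ T' then b (e.symm ⟨g, hg⟩) else 0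
      with hat
    have hat'0 : at' t₀ = 0 := by simp only [hat]; exact dif_neg ht₀T'
    have h1 : (∏ g ∈ T, u g ^ at' g) = 1 := by
      rw [← Finset.mul_prod_erase T _ ht₀T, hat'0, zpow_zero, one_mul, ← hT',
        ← hTprod (fun g => u g ^ at' g)]
      calc ∏ i : Fin m, u (e i) ^ at' (e i) = ∏ i : Fin m, u (e i) ^ b i :=
            Finset.prod_congr rfl fun i _ => by simp only [hat]; rw [hat'_mem b i]
        _ = Φ a := rfl
        _ = 1 := ha
    obtain ⟨c, hc⟩ := (hker at').mp h1
    have hc0 : c = 0 := by rw [← hc t₀ ht₀T, hat'0]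
    have hb0 : b = 0 := by
      funext i
      have hmemT : ((e i : H ≃ₐ[ℚ] H)) ∈ T := hT'subset (e i).2
      have h2 := hc _ hmemT
      simp only [hat] at h2
      rw [hat'_mem b i] at h2
      rw [Pi.zero_apply, h2, hc0]
    show a = 1
    have : Multiplicative.ofAdd b = a := by rw [hb]; rfl
    rw [← this, hb0]
    rfl
  have hrange : Φ.range = Subgroup.closure {x : (𝓞 H)ˣ | ∃ g ∈ T, x = galU H g η} := by
    apply le_antisymm
    · rintro x ⟨a, rfl⟩
      show (∏ i : Fin m, u (e i) ^ (Multiplicative.toAdd a) i) ∈ _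
      apply Subgroup.prod_mem
      intro i _
      apply Subgroup.zpow_mem
      exact Subgroup.subset_closure
        ⟨(e i : H ≃ₐ[ℚ] H), hT'subset (e i).2, rfl⟩
    · rw [Subgroup.closure_le]
      rintro x ⟨g, hgT, rfl⟩
      show u g ∈ Φ.range
      rcases eq_or_ne g t₀ with rfl | hne
      · have hsplit : u g * ∏ t ∈ T', u t = 1 := by
          rw [hT', Finset.mul_prod_erase T u hgT]
          exact hprod1
        have hmem : (∏ t ∈ T', u t) ∈ Φ.range := by
          refine ⟨Multiplicative.ofAdd (fun _ => 1), ?_⟩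
          rw [hΦapply]
          calc ∏ i : Fin m, u (e i) ^ (1 : ℤ) = ∏ i : Fin m, u (e i) :=
                Finset.prod_congr rfl fun i _ => zpow_one _
            _ = ∏ t ∈ T', u t := hTprod u
        rw [eq_inv_of_mul_eq_one_left hsplit]
        exact Φ.range.inv_mem hmem
      · have hgT' : g ∈ T' := Finset.mem_erase.mpr ⟨hne, hgT⟩
        refine ⟨Multiplicative.ofAdd (Pi.single (e.symm ⟨g, hgT'⟩) 1), ?_⟩
        rw [hΦapply, Finset.prod_eq_single (e.symm ⟨g, hgT'⟩)]
        · rw [Pi.single_eq_same, zpow_one, Equiv.apply_symm_apply]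
        · intro i _ hi
          rw [Pi.single_eq_of_ne hi, zpow_zero]
        · intro habs
          exact absurd (Finset.mem_univ _) habs
  exact ⟨η, hτη, hprod1, hker,
    ⟨(MulEquiv.subgroupCongr hrange.symm).trans (MonoidHom.ofInjective hΦinj).symm⟩⟩
end

section
/- For each i = 1,…,d, the subgroup V_i of 𝓞_H^× is stable under the natural action of G = Gal(H/F) on 𝓞_H^×, i.e. g(V_i) = V_i for every g ∈ G. -/
set_option synthInstance.maxHeartbeats 400000
set_option maxHeartbeats 1000000


open NumberField

/-- The subgroup `V_i = { ∏_{g ∈ S} (h_i⁻¹(g(η)))^(a_g) : ∑ a_g = 0 }` of `𝓞_H^×`,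
here given as a set, with `hi` playing the role of `h_i`. -/
noncomputable def VSet (H : Type*) [Field H] [NumberField H]
    (S : Finset (H ≃ₐ[ℚ] H)) (η : (𝓞 H)ˣ) (hi : H ≃ₐ[ℚ] H) : Set ((𝓞 H)ˣ) :=
  { u | ∃ a : (H ≃ₐ[ℚ] H) → ℤ,
      (∑ g ∈ S, a g) = 0 ∧ u = ∏ g ∈ S, galU H (hi⁻¹ * g) η ^ a g }

lemma galU_mul_apply (H : Type*) [Field H] [NumberField H] (g k : H ≃ₐ[ℚ] H) (u : (𝓞 H)ˣ) :
    galU H (g * k) u = galU H g (galU H k u) := by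
  have : galRestrict ℤ ℚ H (𝓞 H) (g * k) = galRestrict ℤ ℚ H (𝓞 H) g * galRestrict ℤ ℚ H (𝓞 H) k :=
    map_mul _ g k
  ext
  simp [galU, this]

lemma galU_one_apply (H : Type*) [Field H] [NumberField H] (u : (𝓞 H)ˣ) :
    galU H 1 u = u := by
  have : galRestrict ℤ ℚ H (𝓞 H) 1 = 1 := (galRestrict ℤ ℚ H (𝓞 H)).map_one
  ext
  simp [galU, this]

lemma zpow_finset_sum {G : Type*} [CommGroup G] (x : G) {ι : Type*} (s : Finset ι)
    (f : ι → ℤ) : x ^ (∑ i ∈ s, f i) = ∏ i ∈ s, x ^ f i := by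
  classical
  induction s using Finset.induction_on with
  | empty => simp
  | insert _ _ hnot ih => rw [Finset.sum_insert hnot, Finset.prod_insert hnot, zpow_add, ih]

lemma VSet_subset (H : Type*) [Field H] [NumberField H]
    (τ : H ≃ₐ[ℚ] H) (hτ2 : τ * τ = 1)
    (Gsub : Subgroup (H ≃ₐ[ℚ] H)) [Gsub.Normal]
    (η : (𝓞 H)ˣ) (hητ : galU H τ η = η)
    (S : Finset (H ≃ₐ[ℚ] H)) (hSG : ∀ s ∈ S, s ∈ Gsub)
    (hS : ∀ g ∈ Gsub, ∃! s, s ∈ S ∧ (s = g ∨ s = g * τ))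
    (hi : H ≃ₐ[ℚ] H) (g : H ≃ₐ[ℚ] H) (hg : g ∈ Gsub) :
    (fun u => galU H g u) '' VSet H S η hi ⊆ VSet H S η hi := by
  classical
  rintro _ ⟨u, ⟨a, ha0, rfl⟩, rfl⟩
  set g' : H ≃ₐ[ℚ] H := hi * g * hi⁻¹ with hg'def
  have hg' : g' ∈ Gsub := by
    have := Subgroup.Normal.conj_mem ‹Gsub.Normal› g hg hi
    simpa [hg'def, mul_assoc] using this
  have hconj : ∀ s : H ≃ₐ[ℚ] H, hi⁻¹ * (g' * s) = g * (hi⁻¹ * s) := by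
    intro s; simp [hg'def, mul_assoc]
  have hexists : ∀ s ∈ S, ∃ t, t ∈ S ∧
      galU H (hi⁻¹ * t) η = galU H (g * (hi⁻¹ * s)) η := by
    intro s hs
    obtain ⟨t, ⟨htS, htc⟩, _⟩ := hS (g' * s) (mul_mem hg' (hSG s hs))
    refine ⟨t, htS, ?_⟩
    rcases htc with rfl | rfl
    · rw [hconj]
    · have h2 : hi⁻¹ * (g' * s * τ) = hi⁻¹ * (g' * s) * τ :=
        (mul_assoc hi⁻¹ (g' * s) τ).symm
      rw [h2, galU_mul_apply, hητ, hconj]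
  set σ : (H ≃ₐ[ℚ] H) → (H ≃ₐ[ℚ] H) := fun s =>
    if hs : s ∈ S then (hexists s hs).choose else 1 with hσdef
  have hσS : ∀ s ∈ S, σ s ∈ S := by
    intro s hs; simp only [hσdef, dif_pos hs]; exact (hexists s hs).choose_spec.1
  have hσval : ∀ s ∈ S, galU H (hi⁻¹ * σ s) η = galU H (g * (hi⁻¹ * s)) η := by
    intro s hs; simp only [hσdef, dif_pos hs]; exact (hexists s hs).choose_spec.2
  refine ⟨fun t => ∑ s ∈ S.filter (fun s => σ s = t), a s, ?_, ?_⟩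
  · rw [Finset.sum_fiberwise_of_maps_to hσS, ha0]
  · have h1 : galU H g (∏ s ∈ S, galU H (hi⁻¹ * s) η ^ a s)
        = ∏ s ∈ S, galU H (g * (hi⁻¹ * s)) η ^ a s := by
      rw [map_prod]
      refine Finset.prod_congr rfl fun s _ => ?_
      rw [map_zpow, ← galU_mul_apply]
    show galU H g (∏ s ∈ S, galU H (hi⁻¹ * s) η ^ a s)
        = ∏ t ∈ S, galU H (hi⁻¹ * t) η ^ (∑ s ∈ S.filter (fun s => σ s = t), a s)
    rw [h1]
    calc ∏ s ∈ S, galU H (g * (hi⁻¹ * s)) η ^ a s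
        = ∏ s ∈ S, galU H (hi⁻¹ * σ s) η ^ a s :=
          Finset.prod_congr rfl fun s hs => by rw [hσval s hs]
      _ = ∏ t ∈ S, ∏ s ∈ S.filter (fun s => σ s = t), galU H (hi⁻¹ * t) η ^ a s := by
          rw [← Finset.prod_fiberwise_of_maps_to hσS
            (fun s => (galU H (hi⁻¹ * σ s)) η ^ a s)]
          exact Finset.prod_congr rfl fun t _ => Finset.prod_congr rfl fun s hs => by
            rw [(Finset.mem_filter.mp hs).2]
      _ = ∏ t ∈ S, galU H (hi⁻¹ * t) η ^ (∑ s ∈ S.filter (fun s => σ s = t), a s) := by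
          refine Finset.prod_congr rfl fun t _ => ?_
          rw [zpow_finset_sum]

/-- Each `V_i` is stable under the natural action of `G = Gal(H/F)`:
`g(V_i) = V_i` for all `g ∈ G`. -/
theorem stmt_1 (H : Type*) [Field H] [NumberField H] [IsGalois ℚ H]
    (hH : (H →+* ℝ) → False)
    (ι : H →+* ℂ) (τ : H ≃ₐ[ℚ] H)
    (hιτ : ∀ x : H, ι (τ x) = starRingEnd ℂ (ι x))
    (hτ2 : τ * τ = 1) (hτ1 : τ ≠ 1)
    -- `G = Gal(H/F)` for a totally real subfield `F ⊆ H`, Galois over `ℚ`, of degree `d`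
    (d : ℕ) (hd : 0 < d)
    (Gsub : Subgroup (H ≃ₐ[ℚ] H)) [Gsub.Normal] (hGd : Gsub.index = d)
    (hτG : τ ∈ Gsub)
    -- representatives of the left cosets of `G` in `Gal(H/ℚ)`, with `h 0 = 1`
    (h : Fin d → (H ≃ₐ[ℚ] H)) (hreps : ∀ g : H ≃ₐ[ℚ] H, ∃! i : Fin d, (h i)⁻¹ * g ∈ Gsub)
    (h1 : h ⟨0, hd⟩ = 1)
    -- the Minkowski unit `η`
    (η : (𝓞 H)ˣ) (hητ : galU H τ η = η)
    (T : Finset (H ≃ₐ[ℚ] H))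
    (hT : ∀ g : H ≃ₐ[ℚ] H, ∃! t, t ∈ T ∧ (t = g ∨ t = g * τ))
    (hηT : (∏ g ∈ T, galU H g η) = 1)
    (hηker : ∀ a : (H ≃ₐ[ℚ] H) → ℤ,
      (∏ g ∈ T, galU H g η ^ a g) = 1 ↔ ∃ c : ℤ, ∀ g ∈ T, a g = c)
    -- representatives of the left cosets of `{1, τ}` in `G`
    (S : Finset (H ≃ₐ[ℚ] H)) (hSG : ∀ s ∈ S, s ∈ Gsub)
    (hS : ∀ g ∈ Gsub, ∃! s, s ∈ S ∧ (s = g ∨ s = g * τ)) :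
    ∀ i : Fin d, ∀ g ∈ Gsub,
      (fun u => galU H g u) '' VSet H S η (h i) = VSet H S η (h i) := by
  intro i g hg
  apply Set.Subset.antisymm
  · exact VSet_subset H τ hτ2 Gsub η hητ S hSG hS (h i) g hg
  · intro u hu
    refine ⟨galU H g⁻¹ u,
      VSet_subset H τ hτ2 Gsub η hητ S hSG hS (h i) g⁻¹ (inv_mem hg) ⟨u, hu, rfl⟩, ?_⟩
    show galU H g (galU H g⁻¹ u) = u
    rw [← galU_mul_apply, mul_inv_cancel, galU_one_apply]
end

section
/- Fix ḡ_0 ∈ S, set Ŝ = S ∖ {ḡ_0} (so |Ŝ| = [H:F]/2 − 1 = [H:ℚ]/(2d) − 1), and for 1 ≤ i ≤ d and g ∈ Ŝ put η_{i,g} = h_i^{-1}(g(η)) · (h_i^{-1}(ḡ_0(η)))^{-1}. Then: (i) for each i, the family (η_{i,g})_{g∈Ŝ} is a ℤ-basis of V_i, which is therefore free abelian of rank [H:ℚ]/(2d) − 1; (ii) the full family (η_{i,g})_{1≤i≤d, g∈Ŝ} is multiplicatively independent (any relation ∏_{i,g} η_{i,g}^{c_{i,g}} = 1 with c_{i,g}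 ∈ ℤ forces all c_{i,g} = 0) and is a ℤ-basis of the subgroup of 𝓞_H^× generated by V_1, …, V_d; in particular this subgroup is the internal direct sum of the V_i, and V_i ∩ V_j = {1} whenever i ≠ j. -/
open NumberField

lemma prod_zpow_sum {G : Type*} [CommGroup G] {α : Type*} (x : G) (s : Finset α) (f : α → ℤ) :
    ∏ a ∈ s, x ^ f a = x ^ ∑ a ∈ s, f a := by
  induction s using Finset.cons_induction with
  | empty => simp
  | cons a s ha ih => rw [Finset.prod_cons, Finset.sum_cons, ih, zpow_add]

lemma expand_prod {G : Type*} [CommGroup G] {α : Type*} [DecidableEq α] (S : Finset α)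
    (g0 : α) (hg0 : g0 ∈ S) (x : α → G) (c : α → ℤ) :
    ∏ g ∈ S.erase g0, (x g * (x g0)⁻¹) ^ c g
      = ∏ g ∈ S, x g ^ (if g = g0 then -(∑ g' ∈ S.erase g0, c g') else c g) := by
  calc ∏ g ∈ S.erase g0, (x g * (x g0)⁻¹) ^ c g
      = (∏ g ∈ S.erase g0, x g ^ c g) * ∏ g ∈ S.erase g0, x g0 ^ (-c g) := by
        rw [← Finset.prod_mul_distrib]
        exact Finset.prod_congr rfl fun g _ => by rw [mul_zpow, inv_zpow']
    _ = (∏ g ∈ S.erase g0, x g ^ c g) * x g0 ^ (-(∑ g' ∈ S.erase g0, c g')) := by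
        rw [prod_zpow_sum, Finset.sum_neg_distrib]
    _ = x g0 ^ (-(∑ g' ∈ S.erase g0, c g')) * ∏ g ∈ S.erase g0, x g ^ c g := mul_comm _ _
    _ = ∏ g ∈ S, x g ^ (if g = g0 then -(∑ g' ∈ S.erase g0, c g') else c g) := by
        rw [← Finset.mul_prod_erase S _ hg0, if_pos rfl]
        congr 1
        exact Finset.prod_congr rfl fun g hg => by rw [if_neg (Finset.ne_of_mem_erase hg)]

lemma galU_mul (H : Type*) [Field H] [NumberField H] (g1 g2 : H ≃ₐ[ℚ] H) (u : (𝓞 H)ˣ) :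
    galU H (g1 * g2) u = galU H g1 (galU H g2 u) := by
  have := map_mul (galRestrict ℤ ℚ H (𝓞 H)) g1 g2
  ext
  simp [galU, this, AlgEquiv.mul_apply]

lemma key_indep (H : Type*) [Field H] [NumberField H] [DecidableEq (H ≃ₐ[ℚ] H)]
    (τ : H ≃ₐ[ℚ] H) (hτ2 : τ * τ = 1)
    (d : ℕ) (Gsub : Subgroup (H ≃ₐ[ℚ] H)) [Gsub.Normal] (hτG : τ ∈ Gsub)
    (h : Fin d → (H ≃ₐ[ℚ] H)) (hreps : ∀ g : H ≃ₐ[ℚ] H, ∃! i : Fin d, (h i)⁻¹ * g ∈ Gsub)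
    (η : (𝓞 H)ˣ) (hητ : galU H τ η = η)
    (T : Finset (H ≃ₐ[ℚ] H))
    (hT : ∀ g : H ≃ₐ[ℚ] H, ∃! t, t ∈ T ∧ (t = g ∨ t = g * τ))
    (hηker : ∀ a : (H ≃ₐ[ℚ] H) → ℤ,
      (∏ g ∈ T, galU H g η ^ a g) = 1 ↔ ∃ c : ℤ, ∀ g ∈ T, a g = c)
    (S : Finset (H ≃ₐ[ℚ] H)) (hSG : ∀ s ∈ S, s ∈ Gsub)
    (hS : ∀ g ∈ Gsub, ∃! s, s ∈ S ∧ (s = g ∨ s = g * τ))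
    (hSne : S.Nonempty)
    (b : Fin d → (H ≃ₐ[ℚ] H) → ℤ)
    (hbsum : ∀ i, ∑ g ∈ S, b i g = 0)
    (hbprod : (∏ i, ∏ g ∈ S, galU H ((h i)⁻¹ * g) η ^ b i g) = 1) :
    ∀ i, ∀ g ∈ S, b i g = 0 := by
  classical
  -- injectivity of (i, g) ↦ the coset {h i⁻¹ g, h i⁻¹ g τ}
  have uniq : ∀ (i j : Fin d) (g g' : H ≃ₐ[ℚ] H), g ∈ S → g' ∈ S →
      ∀ t, (t = (h i)⁻¹ * g ∨ t = (h i)⁻¹ * g * τ) →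
        (t = (h j)⁻¹ * g' ∨ t = (h j)⁻¹ * g' * τ) → i = j ∧ g = g' := by
    intro i j g g' hg hg' t ht1 ht2
    obtain ⟨w, hw, heq⟩ : ∃ w, (w = 1 ∨ w = τ) ∧ (h i)⁻¹ * g = (h j)⁻¹ * g' * w := by
      rcases ht1 with h1 | h1 <;> rcases ht2 with h2 | h2
      · exact ⟨1, Or.inl rfl, by rw [mul_one, ← h1, h2]⟩
      · exact ⟨τ, Or.inr rfl, by rw [← h1, h2]⟩
      · refine ⟨τ, Or.inr rfl, ?_⟩
        have e : (h i)⁻¹ * g * τ = (h j)⁻¹ * g' := by rw [← h1, h2]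
        calc (h i)⁻¹ * g = (h i)⁻¹ * g * (τ * τ) := by rw [hτ2, mul_one]
          _ = ((h i)⁻¹ * g * τ) * τ := (mul_assoc _ τ τ).symm
          _ = (h j)⁻¹ * g' * τ := by rw [e]
      · exact ⟨1, Or.inl rfl, by rw [mul_one]; exact mul_right_cancel (h1.symm.trans h2)⟩
    have hwG : w ∈ Gsub := by rcases hw with rfl | rfl; exacts [one_mem _, hτG]
    have hinv : (h i)⁻¹ = (h j)⁻¹ * g' * w * g⁻¹ := by rw [← heq]; group
    have hij : i = j := by
      have hmem : (h i)⁻¹ * h j ∈ Gsub := by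
        have hm : (h j)⁻¹ * (g' * w * g⁻¹) * ((h j)⁻¹)⁻¹ ∈ Gsub :=
          Subgroup.Normal.conj_mem ‹Gsub.Normal› _
            (mul_mem (mul_mem (hSG g' hg') hwG) (inv_mem (hSG g hg))) _
        have : (h i)⁻¹ * h j = (h j)⁻¹ * (g' * w * g⁻¹) * ((h j)⁻¹)⁻¹ := by
          rw [hinv]; group
        rw [this]; exact hm
      exact (hreps (h j)).unique hmem (by rw [inv_mul_cancel]; exact one_mem _)
    subst hij
    have hgg : g = g' * w := mul_left_cancel heq
    rcases hw with hw1 | hw1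
    · exact ⟨rfl, by rw [hgg, hw1, mul_one]⟩
    · have : g' = g * τ := by rw [hgg, hw1, mul_assoc, hτ2, mul_one]
      exact ⟨rfl, ((hS g (hSG g hg)).unique ⟨hg, Or.inl rfl⟩ ⟨hg', Or.inr this⟩)⟩
  -- choose representatives in T
  choose t₀ ht₀T ht₀eq using fun (i : Fin d) (g : H ≃ₐ[ℚ] H) => (hT ((h i)⁻¹ * g)).exists
  have hy₀ : ∀ i g, galU H (t₀ i g) η = galU H ((h i)⁻¹ * g) η := by
    intro i g
    rcases ht₀eq i g with e | e
    · rw [e]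
    · rw [e, galU_mul, hητ]
  set a : (H ≃ₐ[ℚ] H) → ℤ := fun t => ∑ p ∈ Finset.univ ×ˢ S,
    if (t = (h p.1)⁻¹ * p.2 ∨ t = (h p.1)⁻¹ * p.2 * τ) then b p.1 p.2 else 0 with ha
  have hprodT : (∏ t ∈ T, galU H t η ^ a t) = 1 := by
    calc ∏ t ∈ T, galU H t η ^ a t
        = ∏ t ∈ T, ∏ p ∈ Finset.univ ×ˢ S, galU H t η ^
            (if (t = (h p.1)⁻¹ * p.2 ∨ t = (h p.1)⁻¹ * p.2 * τ) then b p.1 p.2 else 0) :=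
          Finset.prod_congr rfl fun t _ => by rw [ha]; exact (prod_zpow_sum _ _ _).symm
      _ = ∏ p ∈ Finset.univ ×ˢ S, ∏ t ∈ T, galU H t η ^
            (if (t = (h p.1)⁻¹ * p.2 ∨ t = (h p.1)⁻¹ * p.2 * τ) then b p.1 p.2 else 0) :=
          Finset.prod_comm
      _ = ∏ p ∈ Finset.univ ×ˢ S, galU H ((h p.1)⁻¹ * p.2) η ^ b p.1 p.2 := by
          refine Finset.prod_congr rfl fun p _ => ?_
          rw [Finset.prod_eq_single_of_mem (t₀ p.1 p.2) (ht₀T p.1 p.2) ?_]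
          · rw [if_pos (ht₀eq p.1 p.2), hy₀]
          · intro t htT htne
            rw [if_neg, zpow_zero]
            intro hcond
            exact htne ((hT ((h p.1)⁻¹ * p.2)).unique ⟨htT, hcond⟩ ⟨ht₀T _ _, ht₀eq _ _⟩)
      _ = ∏ i, ∏ g ∈ S, galU H ((h i)⁻¹ * g) η ^ b i g := by rw [Finset.prod_product]
      _ = 1 := hbprod
  obtain ⟨c, hc⟩ := (hηker a).mp hprodT
  have hba : ∀ i, ∀ g ∈ S, b i g = c := by
    intro i g hg
    have h1 : a (t₀ i g) = b i g := by
      rw [ha]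
      beta_reduce
      rw [Finset.sum_eq_single_of_mem ((i, g) : Fin d × (H ≃ₐ[ℚ] H))
        (Finset.mem_product.2 ⟨Finset.mem_univ _, hg⟩) ?_]
      · exact if_pos (ht₀eq i g)
      · intro p hp hne
        rw [if_neg]
        intro hcond
        obtain ⟨hij, hgg⟩ := uniq p.1 i p.2 g (Finset.mem_product.1 hp).2 hg (t₀ i g) hcond
          (ht₀eq i g)
        exact hne (Prod.ext hij hgg)
    rw [← h1]
    exact hc _ (ht₀T i g)
  intro i g hg
  have hc0 : c = 0 := by
    have h0 := hbsum i
    rw [Finset.sum_congr rfl (fun g hg => hba i g hg), Finset.sum_const, nsmul_eq_mul] at h0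
    rcases mul_eq_zero.mp h0 with h' | h'
    · exact absurd (Nat.cast_eq_zero.mp h') (Finset.card_ne_zero_of_mem hSne.choose_spec)
    · exact h'
  rw [hba i g hg, hc0]

/-- With `Ŝ = S \\ {g0}` and `η_{i,g} = h_i⁻¹(g(η)) / h_i⁻¹(g0(η))`:
(i) for each `i`, the family `(η_{i,g})_{g ∈ Ŝ}` is a `ℤ`-basis of `V_i`, which is free
abelian of rank `[H:ℚ]/(2d) - 1`; (ii) the full family `(η_{i,g})_{i,g}` is
multiplicatively independent and is a `ℤ`-basis of the subgroup generated by
`V_1, …, V_d`; in particular `V_i ∩ V_j = {1}` for `i ≠ j`. -/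
theorem stmt_3 (H : Type*) [Field H] [NumberField H] [IsGalois ℚ H]
    [DecidableEq (H ≃ₐ[ℚ] H)]
    (hH : (H →+* ℝ) → False)
    (ι : H →+* ℂ) (τ : H ≃ₐ[ℚ] H)
    (hιτ : ∀ x : H, ι (τ x) = starRingEnd ℂ (ι x))
    (hτ2 : τ * τ = 1) (hτ1 : τ ≠ 1)
    -- `G = Gal(H/F)` for a totally real subfield `F ⊆ H`, Galois over `ℚ`, of degree `d`
    (d : ℕ) (hd : 0 < d)
    (Gsub : Subgroup (H ≃ₐ[ℚ] H)) [Gsub.Normal] (hGd : Gsub.index = d)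
    (hτG : τ ∈ Gsub)
    -- representatives of the left cosets of `G` in `Gal(H/ℚ)`, with `h 0 = 1`
    (h : Fin d → (H ≃ₐ[ℚ] H)) (hreps : ∀ g : H ≃ₐ[ℚ] H, ∃! i : Fin d, (h i)⁻¹ * g ∈ Gsub)
    (h1 : h ⟨0, hd⟩ = 1)
    -- the Minkowski unit `η`
    (η : (𝓞 H)ˣ) (hητ : galU H τ η = η)
    (T : Finset (H ≃ₐ[ℚ] H))
    (hT : ∀ g : H ≃ₐ[ℚ] H, ∃! t, t ∈ T ∧ (t = g ∨ t = g * τ))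
    (hηT : (∏ g ∈ T, galU H g η) = 1)
    (hηker : ∀ a : (H ≃ₐ[ℚ] H) → ℤ,
      (∏ g ∈ T, galU H g η ^ a g) = 1 ↔ ∃ c : ℤ, ∀ g ∈ T, a g = c)
    -- representatives of the left cosets of `{1, τ}` in `G`
    (S : Finset (H ≃ₐ[ℚ] H)) (hSG : ∀ s ∈ S, s ∈ Gsub)
    (hS : ∀ g ∈ Gsub, ∃! s, s ∈ S ∧ (s = g ∨ s = g * τ))
    -- a fixed element `g0 ∈ S`
    (g0 : H ≃ₐ[ℚ] H) (hg0 : g0 ∈ S) :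
    -- `|Ŝ| = [H:ℚ]/(2d) - 1`
    (S.erase g0).card = Module.finrank ℚ H / (2 * d) - 1 ∧
    -- (i) `(η_{i,g})_{g ∈ Ŝ}` is a `ℤ`-basis of `V_i`
    (∀ i : Fin d,
      (∀ g ∈ S.erase g0,
        galU H ((h i)⁻¹ * g) η * (galU H ((h i)⁻¹ * g0) η)⁻¹ ∈ VSet H S η (h i)) ∧
      (∀ u ∈ VSet H S η (h i), ∃ c : (H ≃ₐ[ℚ] H) → ℤ,
        u = ∏ g ∈ S.erase g0,
          (galU H ((h i)⁻¹ * g) η * (galU H ((h i)⁻¹ * g0) η)⁻¹) ^ c g) ∧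
      (∀ c : (H ≃ₐ[ℚ] H) → ℤ,
        (∏ g ∈ S.erase g0,
          (galU H ((h i)⁻¹ * g) η * (galU H ((h i)⁻¹ * g0) η)⁻¹) ^ c g) = 1 →
        ∀ g ∈ S.erase g0, c g = 0)) ∧
    -- (ii) the full family is multiplicatively independent …
    (∀ c : Fin d → (H ≃ₐ[ℚ] H) → ℤ,
      (∏ i : Fin d, ∏ g ∈ S.erase g0,
        (galU H ((h i)⁻¹ * g) η * (galU H ((h i)⁻¹ * g0) η)⁻¹) ^ c i g) = 1 →
      ∀ i : Fin d, ∀ g ∈ S.erase g0, c i g = 0) ∧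
    -- … and generates the subgroup generated by `V_1, …, V_d`
    (∀ u ∈ Subgroup.closure (⋃ i : Fin d, VSet H S η (h i)),
      ∃ c : Fin d → (H ≃ₐ[ℚ] H) → ℤ,
        u = ∏ i : Fin d, ∏ g ∈ S.erase g0,
          (galU H ((h i)⁻¹ * g) η * (galU H ((h i)⁻¹ * g0) η)⁻¹) ^ c i g) ∧
    -- in particular the `V_i` intersect trivially
    (∀ i j : Fin d, i ≠ j → VSet H S η (h i) ∩ VSet H S η (h j) = {1}) := by
  classical
  have hSne : S.Nonempty := ⟨g0, hg0⟩
  -- abbreviation for the building blocks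
  -- cardinality
  have hcard : S.card * (2 * d) = Module.finrank ℚ H := by
    have hGal : Fintype.card (H ≃ₐ[ℚ] H) = Module.finrank ℚ H := by
      rw [← Nat.card_eq_fintype_card]; exact IsGalois.card_aut_eq_finrank ℚ H
    have hGmul : Nat.card Gsub * Gsub.index = Nat.card (H ≃ₐ[ℚ] H) := Gsub.card_mul_index
    have hfe : (Finset.univ.filter (· ∈ Gsub)) = S.biUnion (fun s => {s, s * τ}) := by
      ext t
      simp only [Finset.mem_filter, Finset.mem_univ, true_and, Finset.mem_biUnion,
        Finset.mem_insert, Finset.mem_singleton]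
      constructor
      · intro ht
        obtain ⟨s, ⟨hsS, hseq⟩, -⟩ := hS t ht
        rcases hseq with rfl | hseq
        · exact ⟨s, hsS, Or.inl rfl⟩
        · exact ⟨s, hsS, Or.inr (by rw [hseq, mul_assoc, hτ2, mul_one])⟩
      · rintro ⟨s, hsS, h2 | h2⟩
        · exact h2 ▸ hSG s hsS
        · exact h2 ▸ mul_mem (hSG s hsS) hτG
    have hdisj : ∀ x ∈ S, ∀ y ∈ S, x ≠ y →
        Disjoint ({x, x * τ} : Finset (H ≃ₐ[ℚ] H)) {y, y * τ} := by
      intro x hx y hy hxy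
      rw [Finset.disjoint_left]
      intro t ht ht'
      simp only [Finset.mem_insert, Finset.mem_singleton] at ht ht'
      apply hxy
      rcases ht with rfl | rfl <;> rcases ht' with h2 | h2
      · exact h2
      · exact (hS y (hSG y hy)).unique ⟨hx, Or.inr h2⟩ ⟨hy, Or.inl rfl⟩
      · exact (hS x (hSG x hx)).unique ⟨hx, Or.inl rfl⟩ ⟨hy, Or.inr h2.symm⟩
      · exact mul_right_cancel h2
    have hpair : ∀ s : H ≃ₐ[ℚ] H, ({s, s * τ} : Finset (H ≃ₐ[ℚ] H)).card = 2 := by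
      intro s
      rw [Finset.card_insert_of_notMem, Finset.card_singleton]
      simp only [Finset.mem_singleton]
      intro hcon
      exact hτ1 (left_eq_mul.mp hcon)
    have hGcard : Nat.card Gsub = S.card * 2 := by
      rw [Nat.card_eq_fintype_card, Fintype.card_subtype]
      rw [hfe, Finset.card_biUnion hdisj]
      rw [Finset.sum_congr rfl (fun s _ => hpair s), Finset.sum_const, smul_eq_mul]
    rw [← hGal, ← Nat.card_eq_fintype_card, ← hGmul, hGcard, hGd]
    ring
  have hcard1 : (S.erase g0).card = Module.finrank ℚ H / (2 * d) - 1 := by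
    rw [← hcard, Nat.mul_div_cancel _ (by positivity), Finset.card_erase_of_mem hg0]
  -- the expansion lemma specialized
  have expand' : ∀ (i : Fin d) (c : (H ≃ₐ[ℚ] H) → ℤ),
      (∏ g ∈ S.erase g0,
        (galU H ((h i)⁻¹ * g) η * (galU H ((h i)⁻¹ * g0) η)⁻¹) ^ c g)
        = ∏ g ∈ S, galU H ((h i)⁻¹ * g) η ^
            (if g = g0 then -(∑ g' ∈ S.erase g0, c g') else c g) :=
    fun i c => expand_prod S g0 hg0 (fun g => galU H ((h i)⁻¹ * g) η) c
  have hbsgen : ∀ c : (H ≃ₐ[ℚ] H) → ℤ,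
      ∑ g ∈ S, (if g = g0 then -(∑ g' ∈ S.erase g0, c g') else c g) = 0 := by
    intro c
    rw [← Finset.add_sum_erase S _ hg0, if_pos rfl,
      Finset.sum_congr rfl (fun g' hg' => if_neg (Finset.ne_of_mem_erase hg'))]
    exact neg_add_cancel _
  -- full multiplicative independence
  have ind : ∀ c : Fin d → (H ≃ₐ[ℚ] H) → ℤ,
      (∏ i : Fin d, ∏ g ∈ S.erase g0,
        (galU H ((h i)⁻¹ * g) η * (galU H ((h i)⁻¹ * g0) η)⁻¹) ^ c i g) = 1 →
      ∀ i : Fin d, ∀ g ∈ S.erase g0, c i g = 0 := by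
    intro c hrel i g hg
    have hres := key_indep H τ hτ2 d Gsub hτG h hreps η hητ T hT hηker S hSG hS hSne
      (fun j g' => if g' = g0 then -(∑ g'' ∈ S.erase g0, c j g'') else c j g')
      (fun j => hbsgen (c j))
      (by rw [Finset.prod_congr rfl (fun j (_ : j ∈ Finset.univ) => (expand' j (c j)).symm)]
          exact hrel)
      i g (Finset.mem_of_mem_erase hg)
    simpa only [if_neg (Finset.ne_of_mem_erase hg)] using hres
  -- spanning of each V_i
  have span : ∀ i : Fin d, ∀ u ∈ VSet H S η (h i), ∃ c : (H ≃ₐ[ℚ] H) → ℤ,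
      u = ∏ g ∈ S.erase g0,
        (galU H ((h i)⁻¹ * g) η * (galU H ((h i)⁻¹ * g0) η)⁻¹) ^ c g := by
    intro i u hu
    obtain ⟨a, hasum, hau⟩ := hu
    refine ⟨a, ?_⟩
    rw [hau, expand' i a]
    refine Finset.prod_congr rfl fun g hg => ?_
    congr 1
    by_cases hgg : g = g0
    · subst hgg
      rw [if_pos rfl]
      have := hasum
      rw [← Finset.add_sum_erase S _ hg0] at this
      omega
    · rw [if_neg hgg]
  have onemem : ∀ i : Fin d, (1 : (𝓞 H)ˣ) ∈ VSet H S η (h i) := by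
    intro i
    exact ⟨fun _ => 0, by simp, by simp⟩
  refine ⟨hcard1, ?_, ind, ?_, ?_⟩
  · -- part (i)
    intro i
    refine ⟨?_, span i, ?_⟩
    · -- membership of the η_{i,g}
      intro g hg
      refine ⟨fun g' => if g' = g0
          then -(∑ g'' ∈ S.erase g0, (Pi.single g 1 : (H ≃ₐ[ℚ] H) → ℤ) g'')
          else (Pi.single g 1 : (H ≃ₐ[ℚ] H) → ℤ) g', ?_, ?_⟩
      · exact hbsgen _
      beta_reduce
      rw [← expand' i (Pi.single g 1 : (H ≃ₐ[ℚ] H) → ℤ)]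
      refine ((Finset.prod_eq_single_of_mem g hg fun g' _ hne => ?_).trans ?_).symm
      · rw [Pi.single_eq_of_ne hne, zpow_zero]
      · rw [Pi.single_eq_same, zpow_one]
    · -- independence for fixed i
      intro c hrel g hg
      have := ind (fun j => if j = i then c else 0) ?_ i g hg
      · simpa using this
      · rw [Fintype.prod_eq_single i (fun j hne => by simp [if_neg hne])]
        simpa using hrel
  · -- generation
    intro u hu
    refine Subgroup.closure_induction
      (p := fun x _ => ∃ c : Fin d → (H ≃ₐ[ℚ] H) → ℤ,
        x = ∏ i : Fin d, ∏ g ∈ S.erase g0,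
          (galU H ((h i)⁻¹ * g) η * (galU H ((h i)⁻¹ * g0) η)⁻¹) ^ c i g)
      ?_ ?_ ?_ ?_ hu
    · rintro x hx
      simp only [Set.mem_iUnion] at hx
      obtain ⟨i, hxi⟩ := hx
      obtain ⟨c, hc⟩ := span i x hxi
      refine ⟨fun j => if j = i then c else 0, ?_⟩
      rw [Fintype.prod_eq_single i (fun j hne => by simp [if_neg hne])]
      simpa using hc
    · exact ⟨fun _ _ => 0, by simp⟩
    · rintro x y - - ⟨cx, rfl⟩ ⟨cy, rfl⟩
      refine ⟨fun j g => cx j g + cy j g, ?_⟩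
      rw [← Finset.prod_mul_distrib]
      refine Finset.prod_congr rfl fun j _ => ?_
      rw [← Finset.prod_mul_distrib]
      exact Finset.prod_congr rfl fun g _ => (zpow_add _ _ _).symm
    · rintro x - ⟨cx, rfl⟩
      refine ⟨fun j g => -(cx j g), ?_⟩
      rw [← Finset.prod_inv_distrib]
      refine Finset.prod_congr rfl fun j _ => ?_
      rw [← Finset.prod_inv_distrib]
      exact Finset.prod_congr rfl fun g _ => (zpow_neg _ _).symm
  · -- trivial intersections
    intro i j hij
    ext u
    simp only [Set.mem_inter_iff, Set.mem_singleton_iff]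
    constructor
    · rintro ⟨hui, huj⟩
      obtain ⟨c, hc⟩ := span i u hui
      obtain ⟨c', hc'⟩ := span j u huj
      have hrel : (∏ k : Fin d, ∏ g ∈ S.erase g0,
          (galU H ((h k)⁻¹ * g) η * (galU H ((h k)⁻¹ * g0) η)⁻¹) ^
            (if k = i then c g else if k = j then -(c' g) else 0)) = 1 := by
        rw [← Finset.prod_subset (Finset.subset_univ ({i, j} : Finset (Fin d)))
            (fun k _ hk => Finset.prod_eq_one fun g _ => by
              simp only [Finset.mem_insert, Finset.mem_singleton, not_or] at hk
              rw [if_neg hk.1, if_neg hk.2, zpow_zero]),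
          Finset.prod_pair hij]
        have e1 : (∏ g ∈ S.erase g0,
            (galU H ((h i)⁻¹ * g) η * (galU H ((h i)⁻¹ * g0) η)⁻¹) ^
              (if i = i then c g else if i = j then -(c' g) else 0)) = u := by
          rw [hc]
          exact Finset.prod_congr rfl fun g _ => by rw [if_pos rfl]
        have e2 : (∏ g ∈ S.erase g0,
            (galU H ((h j)⁻¹ * g) η * (galU H ((h j)⁻¹ * g0) η)⁻¹) ^
              (if j = i then c g else if j = j then -(c' g) else 0)) = u⁻¹ := by
          calc ∏ g ∈ S.erase g0,
              (galU H ((h j)⁻¹ * g) η * (galU H ((h j)⁻¹ * g0) η)⁻¹) ^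
                (if j = i then c g else if j = j then -(c' g) else 0)
              = ∏ g ∈ S.erase g0,
                ((galU H ((h j)⁻¹ * g) η * (galU H ((h j)⁻¹ * g0) η)⁻¹) ^ (c' g))⁻¹ :=
                Finset.prod_congr rfl fun g _ => by
                  rw [if_neg (Ne.symm hij), if_pos rfl, zpow_neg]
            _ = (∏ g ∈ S.erase g0,
                (galU H ((h j)⁻¹ * g) η * (galU H ((h j)⁻¹ * g0) η)⁻¹) ^ (c' g))⁻¹ :=
                Finset.prod_inv_distrib _
            _ = u⁻¹ := by rw [← hc']
        rw [e1, e2, mul_inv_cancel]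
      have hz := ind _ hrel
      rw [hc]
      refine Finset.prod_eq_one fun g hg => ?_
      have := hz i g hg
      rw [if_pos rfl] at this
      rw [this, zpow_zero]
    · rintro rfl
      exact ⟨onemem i, onemem j⟩
end

section
/- Let u_1, …, u_d ∈ 𝓞_H^× be units such that the d elements e_k := Σ_{c∈C} ψ(c) · (c^{-1}(u_k) ⊗ 1) of 𝓞_H^× ⊗_ℤ ℂ form a ℂ-basis of the ψ-eigenspace { v ∈ 𝓞_H^× ⊗_ℤ ℂ : c · v = ψ(c) v for all c ∈ C }. Then the d × d complex matrix whose (k,i) entry is Σ_{c∈C} ψ(c) · log |ι(h_i(c^{-1}(u_k)))| is invertible, i.e. its determinant is nonzero. -/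
open NumberField TensorProduct

set_option maxHeartbeats 1000000

/-- `𝓞_H^× ⊗_ℤ ℂ` as a `ℂ`-vector space. -/
noncomputable abbrev UnitsModC (H : Type*) [Field H] [NumberField H] : Type _ :=
  ℂ ⊗[ℤ] Additive ((𝓞 H)ˣ)

/-- The `ℂ`-linear action of `g ∈ Gal(H/ℚ)` on `𝓞_H^× ⊗_ℤ ℂ` induced by the Galois
action on units. -/
noncomputable def actAC (H : Type*) [Field H] [NumberField H] (g : H ≃ₐ[ℚ] H) :
    UnitsModC H →ₗ[ℂ] UnitsModC H :=
  LinearMap.baseChange ℂ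
    (AddMonoidHom.toIntLinearMap (AddEquiv.toAddMonoidHom (MulEquiv.toAdditive (galU H g))))

section Aux

variable (H : Type*) [Field H] [NumberField H]

lemma galU_coe (g : H ≃ₐ[ℚ] H) (x : (𝓞 H)ˣ) :
    ((galU H g x : 𝓞 H) : H) = g ((x : 𝓞 H) : H) := by
  show ((algebraMap (𝓞 H) H) ((galRestrict ℤ ℚ H (𝓞 H) g) (x : 𝓞 H))) = _
  rw [algebraMap_galRestrict_apply]

lemma galU_mul_s9 (g g' : H ≃ₐ[ℚ] H) (x : (𝓞 H)ˣ) :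
    galU H (g * g') x = galU H g (galU H g' x) := by
  apply Units.ext
  apply NumberField.RingOfIntegers.coe_injective
  have : ((galU H (g * g') x : 𝓞 H) : H) = ((galU H g (galU H g' x) : 𝓞 H) : H) := by
    rw [galU_coe, galU_coe, galU_coe, AlgEquiv.mul_apply]
  exact this

variable (ι : H →+* ℂ)

/-- The coordinates of the logarithmic embedding, indexed by `Gal(H/ℚ)`. -/
noncomputable def logMapGal : Additive ((𝓞 H)ˣ) →ₗ[ℤ] ((H ≃ₐ[ℚ] H) → ℂ) :=
  AddMonoidHom.toIntLinearMap
  { toFun := fun a g =>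
      ((Real.log (norm (ι (g ((Additive.toMul a : (𝓞 H)ˣ) : H)))) : ℝ) : ℂ)
    map_zero' := by
      funext g
      simp
    map_add' := by
      intro a b
      funext g
      have hne : ∀ x : (𝓞 H)ˣ, norm (ι (g ((x : 𝓞 H) : H))) ≠ 0 := by
        intro x
        simp only [ne_eq, norm_eq_zero, map_eq_zero]
        exact fun hh => NumberField.Units.coe_ne_zero x (g.injective (by simpa using hh))
      have h1 : (((Additive.toMul (a + b) : (𝓞 H)ˣ)) : H)
          = ((Additive.toMul a : (𝓞 H)ˣ) : H) * ((Additive.toMul b : (𝓞 H)ˣ) : H) := rfl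
      simp only [Pi.add_apply]
      rw [h1, map_mul, map_mul, norm_mul, Real.log_mul, Complex.ofReal_add]
      · exact hne _
      · exact hne _ }

lemma logMapGal_apply (x : (𝓞 H)ˣ) (g : H ≃ₐ[ℚ] H) :
    logMapGal H ι (Additive.ofMul x) g
      = ((Real.log (norm (ι (g ((x : 𝓞 H) : H)))) : ℝ) : ℂ) := rfl

/-- The `ℂ`-linear logarithmic embedding on `𝓞_H^× ⊗ ℂ`. -/
noncomputable def LL : UnitsModC H →ₗ[ℂ] ((H ≃ₐ[ℚ] H) → ℂ) :=
  (logMapGal H ι).liftBaseChange ℂ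

lemma LL_tmul (z : ℂ) (x : (𝓞 H)ˣ) (g : H ≃ₐ[ℚ] H) :
    LL H ι (z ⊗ₜ[ℤ] Additive.ofMul x) g
      = z * ((Real.log (norm (ι (g ((x : 𝓞 H) : H)))) : ℝ) : ℂ) := by
  rw [LL, LinearMap.liftBaseChange_tmul]
  simp [logMapGal_apply]

lemma LL_act (c : H ≃ₐ[ℚ] H) (v : UnitsModC H) (g : H ≃ₐ[ℚ] H) :
    LL H ι (actAC H c v) g = LL H ι v (g * c) := by
  induction v using TensorProduct.induction_on with
  | zero => simp
  | tmul z a =>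
      have h1 : actAC H c (z ⊗ₜ[ℤ] a) = z ⊗ₜ[ℤ] (Additive.ofMul (galU H c (Additive.toMul a))) := by
        rfl
      rw [h1]
      have h2 : a = Additive.ofMul (Additive.toMul a) := rfl
      conv_rhs => rw [h2]
      rw [LL_tmul, LL_tmul, galU_coe, AlgEquiv.mul_apply]
  | add v w hv hw =>
      simp only [map_add, Pi.add_apply, hv, hw]

lemma LL_conj (τ : H ≃ₐ[ℚ] H) (hιτ : ∀ x : H, ι (τ x) = starRingEnd ℂ (ι x))
    (v : UnitsModC H) (g : H ≃ₐ[ℚ] H) :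
    LL H ι v (τ * g) = LL H ι v g := by
  induction v using TensorProduct.induction_on with
  | zero => simp
  | tmul z a =>
      have h2 : a = Additive.ofMul (Additive.toMul a) := rfl
      rw [h2, LL_tmul, LL_tmul, AlgEquiv.mul_apply, hιτ, Complex.norm_conj]
  | add v w hv hw =>
      simp only [map_add, Pi.add_apply, hv, hw]

end Aux

section Inj

variable (H : Type*) [Field H] [NumberField H] [IsGalois ℚ H] (ι : H →+* ℂ)

/-- The real log coordinates of the fundamental system. -/
noncomputable def phiFS : Fin (Units.rank H) → ((H ≃ₐ[ℚ] H) → ℝ) :=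
  fun j g => Real.log (norm (ι (g ((Units.fundSystem H j : 𝓞 H) : H))))

lemma exists_gal_embedding (w : InfinitePlace H) :
    ∃ g : H ≃ₐ[ℚ] H, ∀ x : H, w x = norm (ι (g x)) := by
  letI : Algebra H ℂ := ι.toAlgebra
  haveI : IsScalarTower ℚ H ℂ := IsScalarTower.of_algebraMap_eq'
    (Subsingleton.elim (algebraMap ℚ ℂ) ((algebraMap H ℂ).comp (algebraMap ℚ H)))
  let e := Normal.algHomEquivAut ℚ ℂ (E := H)
  refine ⟨e ((NumberField.InfinitePlace.embedding w).toRatAlgHom), fun x => ?_⟩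
  have h1 : (IsScalarTower.toAlgHom ℚ H ℂ).comp
      (e ((NumberField.InfinitePlace.embedding w).toRatAlgHom)).toAlgHom
      = (NumberField.InfinitePlace.embedding w).toRatAlgHom :=
    e.left_inv _
  have h2 : ι ((e ((NumberField.InfinitePlace.embedding w).toRatAlgHom)) x)
      = NumberField.InfinitePlace.embedding w x := by
    have h3 := DFunLike.congr_fun h1 x
    simp [RingHom.toRatAlgHom] at h3
    exact h3
  rw [h2, NumberField.InfinitePlace.norm_embedding_eq]

lemma phiFS_linearIndependent : LinearIndependent ℝ (phiFS H ι) := by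
  classical
  choose gw hgw using fun w : InfinitePlace H => exists_gal_embedding H ι w
  let T : ((H ≃ₐ[ℚ] H) → ℝ) →ₗ[ℝ]
      ({w : InfinitePlace H // w ≠ NumberField.Units.dirichletUnitTheorem.w₀} → ℝ) :=
    { toFun := fun x w => (NumberField.InfinitePlace.mult w.1) * x (gw w.1)
      map_add' := by intro x y; funext w; simp [mul_add]
      map_smul' := by intro r x; funext w; simp [smul_eq_mul]; ring }
  have hcomp : T ∘ (phiFS H ι) = fun j =>
      Units.logEmbedding H (Additive.ofMul (Units.fundSystem H j)) := by
    funext j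
    funext w
    show (NumberField.InfinitePlace.mult w.1) *
        Real.log (norm (ι (gw w.1 ((Units.fundSystem H j : 𝓞 H) : H)))) = _
    rw [Units.dirichletUnitTheorem.logEmbedding_component, hgw w.1]
  have hind : LinearIndependent ℝ (fun j =>
      Units.logEmbedding H (Additive.ofMul (Units.fundSystem H j))) := by
    have hb := ((Units.basisUnitLattice H).ofZLatticeBasis ℝ _).linearIndependent
    have heq : (fun j => Units.logEmbedding H (Additive.ofMul (Units.fundSystem H j)))
        = fun j => ((Units.basisUnitLattice H).ofZLatticeBasis ℝ _) j := by
      funext j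
      rw [Module.Basis.ofZLatticeBasis_apply, ← Units.logEmbedding_fundSystem]
    rw [heq]
    exact hb
  exact LinearIndependent.of_comp T (by rw [hcomp]; exact hind)

lemma UnitsModC_span_fundSystem (v : UnitsModC H) :
    v ∈ Submodule.span ℂ (Set.range fun j : Fin (Units.rank H) =>
      ((1 : ℂ) ⊗ₜ[ℤ] Additive.ofMul (Units.fundSystem H j) : UnitsModC H)) := by
  induction v using TensorProduct.induction_on with
  | zero => exact Submodule.zero_mem _
  | tmul z a =>
      obtain ⟨⟨ζ, f⟩, hx, -⟩ := Units.exist_unique_eq_mul_prod H (Additive.toMul a)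
      have ha : a = Additive.ofMul ((ζ : (𝓞 H)ˣ) * ∏ i, (Units.fundSystem H i) ^ (f i)) := by
        rw [← hx]; rfl
      have hζ : ∃ n : ℕ, 0 < n ∧ (n : ℤ) • (Additive.ofMul (ζ : (𝓞 H)ˣ)) = 0 := by
        have hfin : IsOfFinOrder (ζ : (𝓞 H)ˣ) := by
          have h2 : (ζ : (𝓞 H)ˣ) ∈ Units.torsion H := ζ.2
          exact (CommGroup.mem_torsion _).mp h2
        refine ⟨orderOf (ζ : (𝓞 H)ˣ), hfin.orderOf_pos, ?_⟩
        have hpow : ((ζ : (𝓞 H)ˣ)) ^ ((orderOf (ζ : (𝓞 H)ˣ) : ℤ)) = 1 := by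
          rw [zpow_natCast]; exact pow_orderOf_eq_one _
        rw [← ofMul_zpow, hpow]
        rfl
      obtain ⟨n, hn, hzero⟩ := hζ
      have hsplit : a = Additive.ofMul ((ζ : (𝓞 H)ˣ))
          + ∑ i, (f i) • Additive.ofMul (Units.fundSystem H i) := by
        rw [ha, ofMul_mul, ofMul_prod]
        simp_rw [ofMul_zpow]
      rw [hsplit, TensorProduct.tmul_add]
      refine Submodule.add_mem _ ?_ ?_
      · have h0 : (n : ℤ) • (z ⊗ₜ[ℤ] Additive.ofMul ((ζ : (𝓞 H)ˣ)) : UnitsModC H) = 0 := by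
          have hmk := ((TensorProduct.mk ℤ ℂ (Additive (𝓞 H)ˣ)) z).map_smul (n : ℤ)
            (Additive.ofMul ((ζ : (𝓞 H)ˣ)))
          simp only [TensorProduct.mk_apply, hzero, TensorProduct.tmul_zero] at hmk
          exact hmk.symm
        have h1 : ((n : ℂ)) • (z ⊗ₜ[ℤ] Additive.ofMul ((ζ : (𝓞 H)ˣ)) : UnitsModC H) = 0 := by
          rw [← Int.cast_smul_eq_zsmul ℂ] at h0
          simpa using h0
        have hne : (n : ℂ) ≠ 0 := Nat.cast_ne_zero.mpr hn.ne'
        have := (smul_eq_zero.mp h1).resolve_left hne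
        rw [this]
        exact Submodule.zero_mem _
      · rw [TensorProduct.tmul_sum]
        refine Submodule.sum_mem _ fun i _ => ?_
        have hmk := ((TensorProduct.mk ℤ ℂ (Additive (𝓞 H)ˣ)) z).map_smul (f i)
          (Additive.ofMul (Units.fundSystem H i))
        simp only [TensorProduct.mk_apply] at hmk
        rw [hmk]
        refine Submodule.smul_of_tower_mem _ _ ?_
        have : (z ⊗ₜ[ℤ] Additive.ofMul (Units.fundSystem H i) : UnitsModC H)
            = z • ((1 : ℂ) ⊗ₜ[ℤ] Additive.ofMul (Units.fundSystem H i) : UnitsModC H) := by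
          rw [TensorProduct.smul_tmul', smul_eq_mul, mul_one]
        rw [this]
        exact Submodule.smul_mem _ _ (Submodule.subset_span ⟨i, rfl⟩)
  | add v w hv hw => exact Submodule.add_mem _ hv hw

lemma LL_inj (v : UnitsModC H) (hv : ∀ g, LL H ι v g = 0) : v = 0 := by
  obtain ⟨z, hz⟩ := (Submodule.mem_span_range_iff_exists_fun ℂ).mp
    (UnitsModC_span_fundSystem H v)
  have hLfs : ∀ j g, LL H ι ((1 : ℂ) ⊗ₜ[ℤ] Additive.ofMul (Units.fundSystem H j)) g
      = ((phiFS H ι j g : ℝ) : ℂ) := by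
    intro j g
    rw [LL_tmul, one_mul]
    rfl
  have hsum : ∀ g, ∑ j, z j * ((phiFS H ι j g : ℝ) : ℂ) = 0 := by
    intro g
    have := congrArg (fun w => w g) (congrArg (LL H ι) hz)
    simp only [map_sum, map_smul, Finset.sum_apply, Pi.smul_apply, smul_eq_mul] at this
    rw [hv g] at this
    rw [← this]
    exact Finset.sum_congr rfl fun j _ => by rw [hLfs]
  have hre : ∑ j, (z j).re • phiFS H ι j = 0 := by
    funext g
    have := congrArg Complex.re (hsum g)
    simpa [Complex.mul_re] using this
  have him : ∑ j, (z j).im • phiFS H ι j = 0 := by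
    funext g
    have := congrArg Complex.im (hsum g)
    simpa [Complex.mul_im] using this
  have h1 := Fintype.linearIndependent_iff.mp (phiFS_linearIndependent H ι)
    (fun j => (z j).re) hre
  have h2 := Fintype.linearIndependent_iff.mp (phiFS_linearIndependent H ι)
    (fun j => (z j).im) him
  have hz0 : ∀ j, z j = 0 := fun j => Complex.ext (h1 j) (h2 j)
  rw [← hz]
  simp [hz0]

end Inj

/-- Let `u_1, …, u_d ∈ 𝓞_H^×` be units such that the elements
`e_k = ∑_{c ∈ C} ψ(c) · (c⁻¹(u_k) ⊗ 1)` form a `ℂ`-basis of the `ψ`-eigenspace of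
`𝓞_H^× ⊗_ℤ ℂ`.  Then the `d × d` matrix with `(k, i)` entry
`∑_{c ∈ C} ψ(c) · log |ι(h_i(c⁻¹(u_k)))|` has nonzero determinant. -/
theorem stmt_9 (H : Type*) [Field H] [NumberField H] [IsGalois ℚ H]
    (hH : (H →+* ℝ) → False)
    (ι : H →+* ℂ) (τ : H ≃ₐ[ℚ] H)
    (hιτ : ∀ x : H, ι (τ x) = starRingEnd ℂ (ι x))
    (hτ2 : τ * τ = 1) (hτ1 : τ ≠ 1)
    -- `G = Gal(H/F)` for a totally real subfield `F ⊆ H` of degree `d`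
    (d : ℕ) (hd : 0 < d)
    (Gsub : Subgroup (H ≃ₐ[ℚ] H)) (hGd : Gsub.index = d)
    (hFreal : ∀ φ : ↥(IntermediateField.fixedField Gsub) →+* ℂ,
      ∀ x : ↥(IntermediateField.fixedField Gsub), (φ x).im = 0)
    -- representatives of the left cosets of `G` in `Gal(H/ℚ)`, with `h 0 = 1`
    (h : Fin d → (H ≃ₐ[ℚ] H)) (hreps : ∀ g : H ≃ₐ[ℚ] H, ∃! i : Fin d, (h i)⁻¹ * g ∈ Gsub)
    (h1 : h ⟨0, hd⟩ = 1)
    -- `C = Gal(H/K)` for a totally complex quadratic extension `K` of `F` inside `H`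
    (Csub : Subgroup (H ≃ₐ[ℚ] H)) [Fintype ↥Csub] (hCG : Csub ≤ Gsub)
    (hKF : Csub.relIndex Gsub = 2)
    (hKcm : (↥(IntermediateField.fixedField Csub) →+* ℝ) → False)
    -- `σ ∈ G ∖ C` and a character `ψ` of `C` with `ψ^σ ≠ ψ`
    (σ : H ≃ₐ[ℚ] H) (hσG : σ ∈ Gsub) (hσC : σ ∉ Csub)
    (ψ : ↥Csub →* ℂ)
    (hψ : ∃ c c' : ↥Csub, (↑c' : H ≃ₐ[ℚ] H) = σ * ↑c * σ⁻¹ ∧ ψ c' ≠ ψ c)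
    -- units `u_1, …, u_d` such that the `e_k` form a basis of the `ψ`-eigenspace
    (u : Fin d → (𝓞 H)ˣ)
    (hindep : LinearIndependent ℂ (fun k : Fin d =>
      ∑ c : ↥Csub, ψ c •
        ((1 : ℂ) ⊗ₜ[ℤ] Additive.ofMul (galU H (↑c)⁻¹ (u k)) : UnitsModC H)))
    (hspan : Submodule.span ℂ (Set.range (fun k : Fin d =>
        ∑ c : ↥Csub, ψ c •
          ((1 : ℂ) ⊗ₜ[ℤ] Additive.ofMul (galU H (↑c)⁻¹ (u k)) : UnitsModC H))) =
      ⨅ c : ↥Csub, Module.End.eigenspace (actAC H ↑c) (ψ c)) :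
    (Matrix.of (fun k i : Fin d =>
      ∑ c : ↥Csub, ψ c *
        Real.log (norm
          (ι (((galU H (h i * (↑c)⁻¹) (u k) : (𝓞 H)ˣ) : 𝓞 H) : H))))).det ≠ 0 := by
  classical
  intro hdet
  set M : Matrix (Fin d) (Fin d) ℂ := Matrix.of (fun k i : Fin d =>
      ∑ c : ↥Csub, ψ c *
        Real.log (norm
          (ι (((galU H (h i * (↑c)⁻¹) (u k) : (𝓞 H)ˣ) : 𝓞 H) : H)))) with hM
  obtain ⟨x, hx0, hxM⟩ := Matrix.exists_vecMul_eq_zero_iff.mpr hdet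
  set E : Fin d → UnitsModC H := fun k =>
    ∑ c : ↥Csub, ψ c •
      ((1 : ℂ) ⊗ₜ[ℤ] Additive.ofMul (galU H (↑c)⁻¹ (u k)) : UnitsModC H) with hE
  set V : UnitsModC H := ∑ k, x k • E k with hV
  -- the E k are eigenvectors
  have hEeig : ∀ k (c : ↥Csub), actAC H ↑c (E k) = ψ c • E k := by
    intro k c
    have hk : E k ∈ ⨅ c : ↥Csub, Module.End.eigenspace (actAC H ↑c) (ψ c) := by
      rw [← hspan]
      exact Submodule.subset_span ⟨k, rfl⟩
    exact Module.End.mem_eigenspace_iff.mp ((Submodule.mem_iInf _).mp hk c)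
  have hVeig : ∀ c : ↥Csub, actAC H ↑c V = ψ c • V := by
    intro c
    rw [hV, map_sum, Finset.smul_sum]
    refine Finset.sum_congr rfl fun k _ => ?_
    rw [map_smul, hEeig k c, smul_comm]
  -- eigen-coordinate relation
  have hrel : ∀ (g : H ≃ₐ[ℚ] H) (c : ↥Csub), LL H ι V (g * ↑c) = ψ c * LL H ι V g := by
    intro g c
    rw [← LL_act, hVeig c, map_smul, Pi.smul_apply, smul_eq_mul]
  -- matrix entries are coordinates of E k
  have hLE : ∀ k i, LL H ι (E k) (h i) = M k i := by
    intro k i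
    rw [hE, hM]
    simp only [map_sum, map_smul, Finset.sum_apply, Pi.smul_apply, smul_eq_mul, Matrix.of_apply]
    refine Finset.sum_congr rfl fun c _ => ?_
    have hco : ((galU H (h i * (↑c)⁻¹) (u k) : 𝓞 H) : H)
        = (h i) (((galU H (↑c)⁻¹ (u k) : 𝓞 H) : H)) := by
      rw [galU_mul_s9, galU_coe, galU_coe]
    rw [LL_tmul, one_mul, hco]
  -- the coordinates of V at the h i vanish
  have hVh : ∀ i, LL H ι V (h i) = 0 := by
    intro i
    have hx : Matrix.vecMul x M i = 0 := by rw [hxM]; rfl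
    have hx' : ∑ k, x k * M k i = 0 := by
      rw [← hx]; simp [Matrix.vecMul, dotProduct]
    calc LL H ι V (h i) = ∑ k, x k * LL H ι (E k) (h i) := by
          rw [hV, map_sum, Finset.sum_apply]
          exact Finset.sum_congr rfl fun k _ => by rw [map_smul, Pi.smul_apply, smul_eq_mul]
      _ = ∑ k, x k * M k i := Finset.sum_congr rfl fun k _ => by rw [hLE]
      _ = 0 := hx' 
  -- index two: product of two non-C elements of G lies in C
  have hC2 : (Csub.subgroupOf Gsub).index = 2 := hKF
  have hmulC : ∀ a b : H ≃ₐ[ℚ] H, a ∈ Gsub → b ∈ Gsub → a ∉ Csub → b ∉ Csub →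
      a * b ∈ Csub := by
    intro a b ha hb hna hnb
    have := Subgroup.mul_mem_iff_of_index_two hC2 (a := ⟨a, ha⟩) (b := ⟨b, hb⟩)
    rw [Subgroup.mem_subgroupOf, Subgroup.mem_subgroupOf, Subgroup.mem_subgroupOf] at this
    simp only [Subgroup.coe_mul] at this
    exact this.mpr (by simp [hna, hnb])
  -- the conjugates of τ by the h i lie in G ∖ C
  have ht : ∀ i : Fin d, ((h i)⁻¹ * τ * (h i) ∈ Gsub) ∧ ((h i)⁻¹ * τ * (h i) ∉ Csub) := by
    intro i
    set t : H ≃ₐ[ℚ] H := (h i)⁻¹ * τ * (h i) with htdef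
    have htapp : ∀ y : H, (h i) (t y) = τ ((h i) y) := by
      intro y
      have hgrp : (h i) * t = τ * (h i) := by rw [htdef]; group
      calc (h i) (t y) = ((h i) * t) y := rfl
        _ = (τ * (h i)) y := by rw [hgrp]
        _ = τ ((h i) y) := rfl
    constructor
    · rw [← IntermediateField.fixingSubgroup_fixedField Gsub]
      intro y
      have hy := y.2
      have him : (ι ((h i) (y : H))).im = 0 := by
        let φF : ↥(IntermediateField.fixedField Gsub) →+* ℂ :=
          (ι.comp ((h i : H ≃ₐ[ℚ] H) : H →+* H)).comp
            (algebraMap ↥(IntermediateField.fixedField Gsub) H)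
        exact hFreal φF y
      have : ι ((h i) (t (y : H))) = ι ((h i) (y : H)) := by
        rw [htapp, hιτ]
        exact Complex.conj_eq_iff_im.mpr him
      have := (h i).injective (ι.injective this)
      exact this
    · intro htC
      refine hKcm ?_
      have key : ∀ y : ↥(IntermediateField.fixedField Csub), (ι ((h i) (y : H))).im = 0 := by
        intro y
        have hty : t (y : H) = (y : H) := y.2 ⟨t, htC⟩
        have : ι ((h i) (y : H)) = starRingEnd ℂ (ι ((h i) (y : H))) := by
          conv_lhs => rw [← hty, htapp, hιτ]
        exact Complex.conj_eq_iff_im.mp this.symm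
      exact
        { toFun := fun y => (ι ((h i) (y : H))).re
          map_one' := by simp
          map_mul' := by
            intro a b
            have hab : ((a * b : ↥(IntermediateField.fixedField Csub)) : H)
                = (a : H) * (b : H) := rfl
            simp only [hab, map_mul, Complex.mul_re, key a, key b, mul_zero, sub_zero,
              zero_mul]
          map_zero' := by simp
          map_add' := by
            intro a b
            have hab : ((a + b : ↥(IntermediateField.fixedField Csub)) : H)
                = (a : H) + (b : H) := rfl
            simp only [hab, map_add, Complex.add_re] }
  -- all coordinates of V vanish
  have hall : ∀ g, LL H ι V g = 0 := by
    intro g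
    obtain ⟨i, hi, -⟩ := hreps g
    set m : H ≃ₐ[ℚ] H := (h i)⁻¹ * g with hm
    have hg : g = h i * m := by rw [hm]; group
    by_cases hmC : m ∈ Csub
    · rw [hg]
      rw [show h i * m = h i * ((⟨m, hmC⟩ : ↥Csub) : H ≃ₐ[ℚ] H) from rfl]
      rw [hrel (h i) ⟨m, hmC⟩, hVh i, mul_zero]
    · set t : H ≃ₐ[ℚ] H := (h i)⁻¹ * τ * (h i) with htdef
      have htm : t * m ∈ Csub := hmulC t m (ht i).1 hi (ht i).2 hmC
      have hgrp : τ * g = h i * (t * m) := by rw [hg, htdef]; group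
      rw [← LL_conj H ι τ hιτ V g, hgrp]
      rw [show h i * (t * m) = h i * ((⟨t * m, htm⟩ : ↥Csub) : H ≃ₐ[ℚ] H) from rfl]
      rw [hrel (h i) ⟨t * m, htm⟩, hVh i, mul_zero]
  have hV0 : V = 0 := LL_inj H ι V hall
  have := Fintype.linearIndependent_iff.mp hindep x (by rw [← hV]; exact hV0)
  obtain ⟨k, hk⟩ := Function.ne_iff.mp hx0
  exact hk (this k)
end
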